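/- Let a : ℕ → ℝ be a nonnegative bounded sequence and let (k_i) be a strictly increasing sequence of positive integers with k_{i+1}/k_i → 1. Then the Cesàro means along the full sequence and along the subsequence agree asymptotically: (1/(n+1)) ∑_{k=0}^n a_k − (1/(k_{i_n}+1)) ∑_{k=0}^{k_{i_n}} a_k → 0, where k_{i_n} = min{k_i : k_i ≥ n}. -/

import Mathlib

open Filter Finset

/-- Cesàro means along the full sequence and along a subsequence `k_i` with
`k_{i+1}/k_i → 1` agree asymptotically, for a nonnegative bounded sequence. -/
theorem cesaro_sub_subseq_cesaro_tendsto_zero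
    (a : ℕ → ℝ) (ha0 : ∀ n, 0 ≤ a n) (hbd : ∃ K : ℝ, ∀ n, a n ≤ K)
    (ks : ℕ → ℕ) (hks : StrictMono ks) (hkspos : 0 < ks 0)
    (hratio : Tendsto (fun i => (ks (i + 1) : ℝ) / ks i) atTop (nhds 1)) :
    Tendsto (fun n : ℕ =>
        ((n : ℝ) + 1)⁻¹ * ∑ k ∈ range (n + 1), a k
      - ((ks (sInf {i | n ≤ ks i}) : ℝ) + 1)⁻¹ *
          ∑ k ∈ range (ks (sInf {i | n ≤ ks i}) + 1), a k)
      atTop (nhds 0) := by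
  obtain ⟨K, hK⟩ := hbd
  have hK0 : 0 ≤ K := le_trans (ha0 0) (hK 0)
  set A : ℕ → ℝ := fun n => ((n : ℝ) + 1)⁻¹ * ∑ k ∈ range (n + 1), a k with hA
  set idx : ℕ → ℕ := fun n => sInf {i | n ≤ ks i} with hidx
  set m : ℕ → ℕ := fun n => ks (idx n) with hm
  have hne : ∀ n, {i | n ≤ ks i}.Nonempty := fun n => ⟨n, hks.le_apply⟩
  have hnm : ∀ n, n ≤ m n := fun n => Nat.sInf_mem (hne n)
  -- key deterministic bound
  have key : ∀ n M : ℕ, 1 ≤ n → n ≤ M → |A n - A M| ≤ K * ((M : ℝ) / n - 1) := by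
    intro n M hn hnM
    have hx : (0:ℝ) < n := by exact_mod_cast hn
    have hy : (0:ℝ) < M := lt_of_lt_of_le hx (by exact_mod_cast hnM)
    have hxy : (n:ℝ) ≤ M := by exact_mod_cast hnM
    have hx1 : (0:ℝ) < (n:ℝ) + 1 := by linarith
    have hy1 : (0:ℝ) < (M:ℝ) + 1 := by linarith
    set Sn := ∑ k ∈ range (n + 1), a k with hSn
    set T := ∑ k ∈ Ico (n + 1) (M + 1), a k with hT
    have hsplit : ∑ k ∈ range (M + 1), a k = Sn + T := by
      rw [hSn, hT, range_eq_Ico, range_eq_Ico]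
      exact (sum_Ico_consecutive a (n := n + 1) (k := M + 1) (Nat.zero_le _) (by omega)).symm
    have hSn0 : 0 ≤ Sn := sum_nonneg fun k _ => ha0 k
    have hSnK : Sn ≤ K * ((n:ℝ) + 1) := by
      calc Sn ≤ ∑ _k ∈ range (n+1), K := sum_le_sum fun k _ => hK k
        _ = K * ((n:ℝ)+1) := by rw [sum_const, card_range, nsmul_eq_mul]; push_cast; ring
    have hT0 : 0 ≤ T := sum_nonneg fun k _ => ha0 k
    have hTK : T ≤ K * ((M:ℝ) - n) := by
      calc T ≤ ∑ _k ∈ Ico (n+1) (M+1), K := sum_le_sum fun k _ => hK k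
        _ = K * ((M:ℝ) - n) := by
            rw [sum_const, Nat.card_Ico, nsmul_eq_mul]
            have h1 : M + 1 - (n+1) = M - n := by omega
            rw [h1, Nat.cast_sub hnM]; ring
    have hAn : A n = ((n:ℝ)+1)⁻¹ * Sn := rfl
    have hAM : A M = ((M:ℝ)+1)⁻¹ * (Sn + T) := by
      simp only [hA, hsplit]
    rw [hAn, hAM, abs_le]
    have hinvx : ((n:ℝ)+1)⁻¹ * ((n:ℝ)+1) = 1 := inv_mul_cancel₀ (ne_of_gt hx1)
    have hinvy : ((M:ℝ)+1)⁻¹ * ((M:ℝ)+1) = 1 := inv_mul_cancel₀ (ne_of_gt hy1)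
    have hinvn : ((n:ℝ))⁻¹ * (n:ℝ) = 1 := inv_mul_cancel₀ (ne_of_gt hx)
    have hMn : K * ((M:ℝ)/n - 1) = K * ((M:ℝ) - n) / n := by
      field_simp
    constructor
    · -- lower bound: -(K*(M/n-1)) ≤ A n - A M, i.e. A M - A n ≤ K*(M/n-1)
      have h1 : ((M:ℝ)+1)⁻¹ * (Sn + T) - ((n:ℝ)+1)⁻¹ * Sn ≤ ((M:ℝ)+1)⁻¹ * T := by
        have hle : ((M:ℝ)+1)⁻¹ ≤ ((n:ℝ)+1)⁻¹ := by
          apply inv_anti₀ hx1; linarith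
        nlinarith [mul_le_mul_of_nonneg_right hle hSn0]
      have h2 : ((M:ℝ)+1)⁻¹ * T ≤ K * ((M:ℝ) - n) / n := by
        have h3 : ((M:ℝ)+1)⁻¹ * T ≤ ((M:ℝ)+1)⁻¹ * (K * ((M:ℝ) - n)) :=
          mul_le_mul_of_nonneg_left hTK (by positivity)
        have h4 : ((M:ℝ)+1)⁻¹ * (K * ((M:ℝ) - n)) ≤ (K * ((M:ℝ) - n)) / n := by
          rw [div_eq_inv_mul]
          apply mul_le_mul_of_nonneg_right _ (by nlinarith)
          apply inv_anti₀ hx; linarith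
        linarith
      rw [hMn]; linarith
    · -- upper bound
      have h1 : ((n:ℝ)+1)⁻¹ * Sn - ((M:ℝ)+1)⁻¹ * (Sn + T) ≤
          Sn * (((n:ℝ)+1)⁻¹ - ((M:ℝ)+1)⁻¹) := by
        have : 0 ≤ ((M:ℝ)+1)⁻¹ * T := by positivity
        nlinarith
      have h2 : (((n:ℝ)+1)⁻¹ - ((M:ℝ)+1)⁻¹) = ((M:ℝ) - n) / (((n:ℝ)+1) * ((M:ℝ)+1)) := by
        field_simp; ring
      have h3 : Sn * (((n:ℝ)+1)⁻¹ - ((M:ℝ)+1)⁻¹) ≤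
          (K * ((n:ℝ)+1)) * (((M:ℝ) - n) / (((n:ℝ)+1) * ((M:ℝ)+1))) := by
        rw [h2]
        exact mul_le_mul_of_nonneg_right hSnK (div_nonneg (by linarith) (by positivity))
      have h4 : (K * ((n:ℝ)+1)) * (((M:ℝ) - n) / (((n:ℝ)+1) * ((M:ℝ)+1)))
          = K * ((M:ℝ) - n) / ((M:ℝ)+1) := by
        field_simp
      have h5 : K * ((M:ℝ) - n) / ((M:ℝ)+1) ≤ K * ((M:ℝ) - n) / n := by
        have hnum : 0 ≤ K * ((M:ℝ) - n) := mul_nonneg hK0 (by linarith)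
        gcongr
        · linarith
      rw [hMn]; linarith
  -- idx tends to infinity
  have hidxtop : Tendsto idx atTop atTop := by
    rw [tendsto_atTop_atTop]
    intro J
    refine ⟨ks J + 1, fun n hn => ?_⟩
    have : ks J < ks (idx n) := lt_of_lt_of_le (by omega) (hnm n)
    exact (hks.lt_iff_lt.mp this).le
  have hidxtop' : Tendsto (fun n => idx n - 1) atTop atTop :=
    (tendsto_sub_atTop_nat 1).comp hidxtop
  -- ratio m n / n tends to 1
  have hmn1 : Tendsto (fun n => (m n : ℝ) / n) atTop (nhds 1) := by
    have hcomp : Tendsto (fun n => (ks (idx n - 1 + 1) : ℝ) / ks (idx n - 1)) atTop (nhds 1) :=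
      hratio.comp hidxtop'
    apply tendsto_of_tendsto_of_tendsto_of_le_of_le' tendsto_const_nhds hcomp
    · -- eventually 1 ≤ m n / n
      filter_upwards [eventually_ge_atTop 1] with n hn
      have h1 : (0:ℝ) < n := by exact_mod_cast hn
      rw [le_div_iff₀ h1, one_mul]
      exact_mod_cast hnm n
    · filter_upwards [hidxtop.eventually_ge_atTop 1, eventually_ge_atTop 1] with n h1 hn1
      have heq : idx n - 1 + 1 = idx n := by omega
      rw [heq]
      have hlt : ks (idx n - 1) < n := by
        by_contra h
        push_neg at h
        have : idx n ≤ idx n - 1 := Nat.sInf_le h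
        omega
      have hpos : (0:ℝ) < ks (idx n - 1) := by
        have := hks.monotone (Nat.zero_le (idx n - 1))
        exact_mod_cast lt_of_lt_of_le hkspos this
      have hn0 : (0:ℝ) < n := by exact_mod_cast hn1
      have hnum : (0:ℝ) ≤ (m n : ℝ) := Nat.cast_nonneg _
      have hle : (ks (idx n - 1) : ℝ) ≤ n := by exact_mod_cast hlt.le
      gcongr
  -- final squeeze
  have hg : Tendsto (fun n => K * ((m n : ℝ) / n - 1)) atTop (nhds 0) := by
    have h := (hmn1.sub_const 1).const_mul K
    have h0 : K * ((1:ℝ) - 1) = 0 := by ring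
    exact h0 ▸ h
  apply squeeze_zero_norm' _ hg
  filter_upwards [eventually_ge_atTop 1] with n hn
  exact key n (m n) hn (hnm n)
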